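/- arXiv:0706.2661 — 4 statements merged into one kernel-verified Lean document; each statement's English description precedes it below -/
import Mathlib

section
/- Let Λ be a measurable space and let μ₀, μ₁, μ₊, μ₋ be probability measures on Λ satisfying μ₀ + μ₁ = μ₊ + μ₋. Then there exist i ∈ {0,1} and j ∈ {+,−} such that μ_i and μ_j are NOT mutually singular. (This is the mathematical core of Theorem 1: in the steering scenario with the maximally entangled state, local causality forces (1/2)p(λ|P₀)+(1/2)p(λ|P₁) = (1/2)p(λ|P₊)+(1/2)p(λ|P₋), and hence the epistemic states of at least one pair of distinct quantum states among {|0⟩,|1⟩} and {|+⟩,|−⟩} must overlap, so any ψ-ontic ontological model reproducing the quantum statistics violates locality.) -/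
open MeasureTheory

/-- **Core of Theorem 1 (ψ-ontic models are nonlocal).** If probability measures
μ₀, μ₁, μ₊, μ₋ on an ontic state space Λ satisfy μ₀ + μ₁ = μ₊ + μ₋ (as forced by local
causality in the steering scenario), then at least one of the pairs (μ₀,μ₊), (μ₀,μ₋),
(μ₁,μ₊), (μ₁,μ₋) fails to be mutually singular, i.e. the epistemic states of some pair of
distinct quantum states among {|0⟩,|1⟩,|+⟩,|−⟩} overlap. -/
theorem exists_not_mutuallySingular_of_mixture_eq {Λ : Type*} [MeasurableSpace Λ]
    (μ₀ μ₁ μp μm : Measure Λ)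
    [IsProbabilityMeasure μ₀] [IsProbabilityMeasure μ₁]
    [IsProbabilityMeasure μp] [IsProbabilityMeasure μm]
    (h : μ₀ + μ₁ = μp + μm) :
    ¬ (μ₀.MutuallySingular μp) ∨ ¬ (μ₀.MutuallySingular μm) ∨
    ¬ (μ₁.MutuallySingular μp) ∨ ¬ (μ₁.MutuallySingular μm) := by
  by_contra hc
  push_neg at hc
  obtain ⟨h0p, h0m, _, _⟩ := hc
  have h0 : μ₀.MutuallySingular (μp + μm) := h0p.add_right h0m
  rw [← h] at h0
  have : μ₀.MutuallySingular μ₀ :=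
    h0.mono_ac (le_refl _).absolutelyContinuous
      ((Measure.le_add_right (le_refl _)).absolutelyContinuous)
  have hz : μ₀ = 0 := Measure.MutuallySingular.self_iff μ₀ |>.mp this
  exact (IsProbabilityMeasure.ne_zero μ₀) hz
end

section
/- Let ψ, φ ∈ ℝ³ be unit vectors and let σ be the surface measure on the unit sphere S² ⊂ ℝ³ (total measure 4π). Then (1/π) ∫_{S²} 1_{{φ·λ > 0}}(λ) · max(ψ·λ, 0) dσ(λ) = (1 + ψ·φ)/2. (This shows that the Kochen–Specker model reproduces the quantum Born-rule statistics, since (1 + ψ·φ)/2 = |⟨ψ|φ⟩|² for the quantum states with Bloch vectors ψ and φ.) -/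
open MeasureTheory Metric Real

section Aux
open Set
open scoped RealInnerProductSpace

local notation "E3" => EuclideanSpace ℝ (Fin 3)

/-- Integrability of bounded functions on the unit ball. -/
lemma aux_integrableOn_ball {q : E3 → ℝ} (hq : AEStronglyMeasurable q volume) (C : ℝ)
    (hb : ∀ x ∈ ball (0 : E3) 1, |q x| ≤ C) :
    IntegrableOn q (ball (0 : E3) 1) volume := by
  refine Measure.integrableOn_of_bounded measure_ball_lt_top.ne hq (M := C) ?_
  filter_upwards [ae_restrict_mem measurableSet_ball] with x hx
  simpa using hb x hx

/-- Change of variables by a linear isometry on the ball. -/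
lemma aux_setIntegral_comp_lie (e : E3 ≃ₗᵢ[ℝ] E3) (q : E3 → ℝ) :
    ∫ x in ball (0 : E3) 1, q (e x) = ∫ x in ball (0 : E3) 1, q x := by
  have h : (⇑e) ⁻¹' (ball (0 : E3) 1) = ball (0 : E3) 1 := by
    ext x
    simp [mem_ball, dist_eq_norm, e.norm_map]
  have hp : MeasurePreserving (⇑e) (volume.restrict (ball (0 : E3) 1))
      (volume.restrict (ball (0 : E3) 1)) := by
    have := e.measurePreserving.restrict_preimage (measurableSet_ball
      (x := (0:E3)) (ε := 1))
    rwa [h] at this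
  exact hp.integral_comp (e.toHomeomorph.measurableEmbedding) q


/-- The area of a disk of squared radius `R2` in the plane `Fin 2 → ℝ`. -/
lemma aux_disk (R2 : ℝ) :
    (volume {w : Fin 2 → ℝ | ∑ j, w j ^ 2 < R2}).toReal = π * max R2 0 := by
  rcases le_or_gt R2 0 with h | h
  · have he : {w : Fin 2 → ℝ | ∑ j, w j ^ 2 < R2} = ∅ := by
      ext w
      simp only [mem_setOf_eq, mem_empty_iff_false, iff_false, not_lt]
      exact h.trans (Finset.sum_nonneg fun j _ => sq_nonneg _)
    rw [he, measure_empty]; simp [max_eq_right h]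
  · have hmp := EuclideanSpace.volume_preserving_symm_measurableEquiv_toLp (Fin 2)
    have hopen : MeasurableSet {w : Fin 2 → ℝ | ∑ j, w j ^ 2 < R2} :=
      (isOpen_lt (continuous_finset_sum _ fun j _ => (continuous_apply j).pow 2)
        continuous_const).measurableSet
    have hpre : (⇑((MeasurableEquiv.toLp 2 (Fin 2 → ℝ)).symm)) ⁻¹'
        {w : Fin 2 → ℝ | ∑ j, w j ^ 2 < R2}
        = ball (0 : EuclideanSpace ℝ (Fin 2)) (Real.sqrt R2) := by
      ext x
      have hx : ‖x‖ = Real.sqrt (∑ j, x j ^ 2) := by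
        rw [EuclideanSpace.norm_eq]
        congr 1
        exact Finset.sum_congr rfl fun j _ => by rw [Real.norm_eq_abs, sq_abs]
      have happ : ∀ j, ((MeasurableEquiv.toLp 2 (Fin 2 → ℝ)).symm) x j = x j := fun j => rfl
      simp only [mem_preimage, mem_setOf_eq, mem_ball_zero_iff, hx, happ]
      exact (Real.sqrt_lt_sqrt_iff (Finset.sum_nonneg fun j _ => sq_nonneg _)).symm
    have := hmp.measure_preimage hopen.nullMeasurableSet
    rw [hpre] at this
    rw [← this, EuclideanSpace.volume_ball]
    have h2 : Real.sqrt π ^ Fintype.card (Fin 2) / Real.Gamma (Fintype.card (Fin 2) / 2 + 1)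
        = π := by
      norm_num [Real.sq_sqrt Real.pi_pos.le, Real.Gamma_two]
    rw [h2]
    have h3 : (ENNReal.ofReal (Real.sqrt R2)) ^ Fintype.card (Fin 2)
        = ENNReal.ofReal R2 := by
      rw [← ENNReal.ofReal_pow (Real.sqrt_nonneg _)]
      norm_num [Real.sq_sqrt h.le]
    rw [h3, ← ENNReal.ofReal_mul h.le, ENNReal.toReal_ofReal (by positivity)]
    rw [max_eq_left h.le, mul_comm]

/-- Coordinate computation: the integral of `|x 0|` over the unit ball of ℝ³. -/
lemma aux_Q : ∫ x in ball (0 : E3) 1, |x 0| = π / 2 := by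
  classical
  set B : Set (ℝ × (Fin 2 → ℝ)) := {p | p.1 ^ 2 + ∑ j, p.2 j ^ 2 < 1} with hB
  have hBmeas : MeasurableSet B :=
    (isOpen_lt (by fun_prop) continuous_const).measurableSet
  -- Step 1 : from `E3` to `Fin 3 → ℝ`
  have h1 : ∫ x in ball (0 : E3) 1, |x 0|
      = ∫ y in {y : Fin 3 → ℝ | ∑ i, y i ^ 2 < 1}, |y 0| := by
    have hmp := (EuclideanSpace.volume_preserving_symm_measurableEquiv_toLp (Fin 3)).symm
    have h2 := hmp.setIntegral_preimage_emb
      ((MeasurableEquiv.toLp 2 (Fin 3 → ℝ)).symm).symm.measurableEmbedding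
      (fun x : E3 => |x 0|) (ball (0 : E3) 1)
    rw [← h2]
    have hpre : (⇑((MeasurableEquiv.toLp 2 (Fin 3 → ℝ)).symm).symm) ⁻¹' (ball (0 : E3) 1)
        = {y : Fin 3 → ℝ | ∑ i, y i ^ 2 < 1} := by
      ext y
      have hx : ∀ x : E3, ‖x‖ = Real.sqrt (∑ i, x i ^ 2) := fun x => by
        rw [EuclideanSpace.norm_eq]
        congr 1
        exact Finset.sum_congr rfl fun j _ => by rw [Real.norm_eq_abs, sq_abs]
      have happ : ∀ i, (((MeasurableEquiv.toLp 2 (Fin 3 → ℝ)).symm).symm y) i = y i :=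
        fun i => rfl
      simp only [mem_preimage, mem_ball_zero_iff, hx, mem_setOf_eq, happ]
      rw [Real.sqrt_lt' one_pos, one_pow]
    rw [hpre]
    rfl
  -- Step 2 : from `Fin 3 → ℝ` to `ℝ × (Fin 2 → ℝ)`
  have h2 : ∫ y in {y : Fin 3 → ℝ | ∑ i, y i ^ 2 < 1}, |y 0|
      = ∫ p in B, |p.1| := by
    have hmp := volume_preserving_piFinSuccAbove (fun _ : Fin 3 => ℝ) 0
    have h3 := hmp.setIntegral_preimage_emb
      (MeasurableEquiv.piFinSuccAbove (fun _ : Fin 3 => ℝ) 0).measurableEmbedding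
      (fun p : ℝ × (Fin 2 → ℝ) => |p.1|) B
    rw [← h3]
    have hpre : (⇑(MeasurableEquiv.piFinSuccAbove (fun _ : Fin 3 => ℝ) 0)) ⁻¹' B
        = {y : Fin 3 → ℝ | ∑ i, y i ^ 2 < 1} := by
      ext y
      have := Fin.sum_univ_succAbove (fun i => y i ^ 2) 0
      simp only [mem_preimage, hB, mem_setOf_eq]
      change y 0 ^ 2 + ∑ j, y ((0 : Fin 3).succAbove j) ^ 2 < 1 ↔ ∑ i, y i ^ 2 < 1
      constructor <;> intro hy
      · rw [this]; exact hy
      · rw [← this]; exact hy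
    rw [hpre]
    rfl
  rw [h1, h2]
  -- Step 3 : Fubini
  rw [Measure.volume_eq_prod, ← integral_indicator hBmeas]
  set F : ℝ × (Fin 2 → ℝ) → ℝ := B.indicator (fun p => |p.1|) with hF
  set S : Set (ℝ × (Fin 2 → ℝ)) := Ioo (-1 : ℝ) 1 ×ˢ (univ.pi fun _ : Fin 2 => Ioo (-1 : ℝ) 1)
    with hS
  have hSmeas : MeasurableSet S :=
    measurableSet_Ioo.prod (MeasurableSet.univ_pi fun _ => measurableSet_Ioo)
  have hSfin : (volume.prod volume) S < ⊤ := by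
    rw [hS, Measure.prod_prod, volume_pi_pi]
    exact ENNReal.mul_lt_top (by simp) (ENNReal.prod_lt_top fun _ _ => by simp)
  have hFmeas : Measurable F := (measurable_fst.abs).indicator hBmeas
  have hbound : ∀ p, ‖F p‖ ≤ S.indicator (fun _ => (1 : ℝ)) p := by
    intro p
    by_cases hp : p ∈ B
    · have hp' : p.1 ^ 2 + ∑ j, p.2 j ^ 2 < 1 := hp
      have hsum : (0 : ℝ) ≤ ∑ j, p.2 j ^ 2 := Finset.sum_nonneg fun j _ => sq_nonneg _
      have h1 : p.1 ^ 2 < 1 := by linarith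
      have habs : |p.1| < 1 := by
        rw [← sq_abs] at h1; nlinarith [abs_nonneg p.1]
      have hmem : p ∈ S := by
        constructor
        · exact abs_lt.1 habs
        · intro j _
          have hj : p.2 j ^ 2 < 1 := by
            have hle : p.2 j ^ 2 ≤ ∑ x, p.2 x ^ 2 :=
              Finset.single_le_sum (f := fun x => p.2 x ^ 2)
                (fun j _ => sq_nonneg _) (Finset.mem_univ j)
            linarith [sq_nonneg p.1]
          rw [← sq_abs] at hj
          have : |p.2 j| < 1 := by nlinarith [abs_nonneg (p.2 j)]
          exact abs_lt.1 this
      rw [hF, Set.indicator_of_mem hp, Set.indicator_of_mem hmem]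
      simpa using habs.le
    · rw [hF, Set.indicator_of_notMem hp]
      simpa using Set.indicator_nonneg (fun _ _ => zero_le_one) p
  have hSint : Integrable (S.indicator fun _ => (1 : ℝ)) (volume.prod volume) :=
    (integrableOn_const hSfin.ne).integrable_indicator hSmeas
  have hFint : Integrable F (volume.prod volume) :=
    Integrable.mono' hSint hFmeas.aestronglyMeasurable (ae_of_all _ hbound)
  rw [integral_prod _ hFint]
  have hDmeas : ∀ r : ℝ, MeasurableSet {w : Fin 2 → ℝ | ∑ j, w j ^ 2 < r} := fun r =>
    (isOpen_lt (by fun_prop) continuous_const).measurableSet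
  have hinner : ∀ t : ℝ, (∫ w, F (t, w)) = (π * max (1 - t ^ 2) 0) * |t| := by
    intro t
    have hw : (fun w : Fin 2 → ℝ => F (t, w))
        = ({w : Fin 2 → ℝ | ∑ j, w j ^ 2 < 1 - t ^ 2}).indicator (fun _ => |t|) := by
      funext w
      by_cases h : ∑ j, w j ^ 2 < 1 - t ^ 2
      · have hmem : (t, w) ∈ B := by
          simp only [hB, mem_setOf_eq]; linarith
        rw [hF, Set.indicator_of_mem hmem,
          Set.indicator_of_mem (show w ∈ {w : Fin 2 → ℝ | ∑ j, w j ^ 2 < 1 - t ^ 2} from h)]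
      · have hmem : (t, w) ∉ B := by
          simp only [hB, mem_setOf_eq, not_lt] at h ⊢; linarith
        rw [hF, Set.indicator_of_notMem hmem,
          Set.indicator_of_notMem
            (show w ∉ {w : Fin 2 → ℝ | ∑ j, w j ^ 2 < 1 - t ^ 2} from h)]
    rw [hw, integral_indicator_const _ (hDmeas _), measureReal_def, aux_disk, smul_eq_mul]
  simp only [hinner]
  have hz : ∀ t : ℝ, t ∉ Ioc (-1 : ℝ) 1 → (π * max (1 - t ^ 2) 0) * |t| = 0 := by
    intro t ht
    simp only [mem_Ioc, not_and_or, not_lt, not_le] at ht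
    have h1 : 1 ≤ t ^ 2 := by
      rcases ht with h | h
      · nlinarith
      · nlinarith
    rw [max_eq_right (by linarith), mul_zero, zero_mul]
  rw [← setIntegral_eq_integral_of_forall_compl_eq_zero hz,
    ← intervalIntegral.integral_of_le (by norm_num : (-1 : ℝ) ≤ 1)]
  have hc : Continuous fun t : ℝ => (π * max (1 - t ^ 2) 0) * |t| := by fun_prop
  rw [← intervalIntegral.integral_add_adjacent_intervals (a := (-1 : ℝ)) (b := 0) (c := 1)
    (hc.intervalIntegrable _ _) (hc.intervalIntegrable _ _)]
  have hL : ∫ t in (-1 : ℝ)..0, (π * max (1 - t ^ 2) 0) * |t| = π * (1 / 4) := by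
    rw [intervalIntegral.integral_congr (g := fun t => π * (t ^ 3 - t)) ?_]
    · rw [intervalIntegral.integral_const_mul,
        intervalIntegral.integral_sub ((continuous_pow 3).intervalIntegrable _ _)
          (continuous_id'.intervalIntegrable _ _)]
      rw [integral_pow, integral_id]
      norm_num
    · intro t ht
      rw [Set.uIcc_of_le (by norm_num : (-1 : ℝ) ≤ 0)] at ht
      have h1 : t ^ 2 ≤ 1 := by nlinarith [ht.1, ht.2]
      show π * max (1 - t ^ 2) 0 * |t| = π * (t ^ 3 - t)
      rw [max_eq_left (by linarith : (0:ℝ) ≤ 1 - t ^ 2), abs_of_nonpos ht.2]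
      ring
  have hR : ∫ t in (0 : ℝ)..1, (π * max (1 - t ^ 2) 0) * |t| = π * (1 / 4) := by
    rw [intervalIntegral.integral_congr (g := fun t => π * (t - t ^ 3)) ?_]
    · rw [intervalIntegral.integral_const_mul,
        intervalIntegral.integral_sub (continuous_id'.intervalIntegrable _ _)
          ((continuous_pow 3).intervalIntegrable _ _)]
      rw [integral_pow, integral_id]
      norm_num
    · intro t ht
      rw [Set.uIcc_of_le (by norm_num : (0 : ℝ) ≤ 1)] at ht
      have h1 : t ^ 2 ≤ 1 := by nlinarith [ht.1, ht.2]
      show π * max (1 - t ^ 2) 0 * |t| = π * (t - t ^ 3)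
      rw [max_eq_left (by linarith : (0:ℝ) ≤ 1 - t ^ 2), abs_of_nonneg ht.1]
      ring
  rw [hL, hR]
  ring

/-- Hyperplanes are null sets. -/
lemma aux_hyperplane (φ : E3) (hφ : φ ≠ 0) : volume {y : E3 | ⟪φ, y⟫ = 0} = 0 := by
  have hset : {y : E3 | ⟪φ, y⟫ = 0} = ((ℝ ∙ φ)ᗮ : Submodule ℝ E3) := by
    ext y
    simp [Submodule.mem_orthogonal_singleton_iff_inner_right]
  rw [hset]
  refine Measure.addHaar_submodule _ _ fun htop => hφ ?_
  have hmem : φ ∈ (ℝ ∙ φ)ᗮ := htop ▸ Submodule.mem_top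
  have := Submodule.mem_orthogonal_singleton_iff_inner_right.1 hmem
  exact inner_self_eq_zero.1 this

/-- The integral of `|⟪v, x⟫|` over the unit ball, for a unit vector `v`. -/
lemma aux_P (v : E3) (hv : ‖v‖ = 1) : ∫ x in ball (0 : E3) 1, |⟪v, x⟫| = π / 2 := by
  obtain ⟨b, hb⟩ : ∃ b : OrthonormalBasis (Fin 3) ℝ E3, b 0 = v := by
    have hcard : Module.finrank ℝ E3 = Fintype.card (Fin 3) := by
      simp [finrank_euclideanSpace]
    have horth : Orthonormal ℝ (({0} : Set (Fin 3)).restrict (fun _ : Fin 3 => v)) := by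
      constructor
      · rintro ⟨i, hi⟩
        exact hv
      · rintro ⟨i, hi⟩ ⟨j, hj⟩ hij
        exact absurd (Subtype.ext ((mem_singleton_iff.1 hi).trans
          (mem_singleton_iff.1 hj).symm)) hij
    obtain ⟨b, hb⟩ := horth.exists_orthonormalBasis_extension_of_card_eq hcard
    exact ⟨b, hb 0 rfl⟩
  have key := aux_setIntegral_comp_lie b.repr (fun y : EuclideanSpace ℝ (Fin 3) => |y 0|)
  have hpt : ∀ x : E3, |b.repr x 0| = |⟪v, x⟫| := by
    intro x
    rw [b.repr_apply_apply, hb]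
  simp only [hpt] at key
  rw [key]
  exact aux_Q

/-- The integral of `⟪v, x⟫` over the unit ball vanishes by symmetry. -/
lemma aux_Z (v : E3) : ∫ x in ball (0 : E3) 1, ⟪v, x⟫ = 0 := by
  have h := aux_setIntegral_comp_lie (LinearIsometryEquiv.neg ℝ (E := E3))
    (fun x : E3 => ⟪v, x⟫)
  have hpt : ∀ x : E3, ⟪v, (LinearIsometryEquiv.neg ℝ (E := E3)) x⟫ = -⟪v, x⟫ := by
    intro x
    have happ : (LinearIsometryEquiv.neg ℝ (E := E3)) x = -x := rfl
    rw [happ, inner_neg_right]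
  simp only [hpt] at h
  rw [integral_neg] at h
  linarith

/-- Reflection symmetry: the half-space moment of a vector orthogonal to `φ` vanishes. -/
lemma aux_refl (φ w : E3) (hw : ⟪w, φ⟫ = 0) :
    ∫ x in ball (0 : E3) 1,
      Set.indicator {y : E3 | 0 < ⟪φ, y⟫} (fun _ => (1 : ℝ)) x * ⟪w, x⟫ = 0 := by
  rcases eq_or_ne w 0 with rfl | hw0
  · simp
  · set R := Submodule.reflection ((ℝ ∙ w)ᗮ) with hR
    have hRw : R w = -w := Submodule.reflection_orthogonalComplement_singleton_eq_neg w
    have hφmem : φ ∈ (ℝ ∙ w)ᗮ := Submodule.mem_orthogonal_singleton_iff_inner_right.2 hw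
    have h1 : ∀ x : E3, ⟪φ, R x⟫ = ⟪φ, x⟫ := by
      intro x
      have := R.inner_map_map φ x
      rwa [show R φ = φ from Submodule.reflection_mem_subspace_eq_self hφmem] at this
    have h2 : ∀ x : E3, ⟪w, R x⟫ = -⟪w, x⟫ := by
      intro x
      have := R.inner_map_map w x
      rw [hRw, inner_neg_left] at this
      linarith
    have h := aux_setIntegral_comp_lie R
      (fun x : E3 => Set.indicator {y : E3 | 0 < ⟪φ, y⟫} (fun _ => (1 : ℝ)) x * ⟪w, x⟫)
    have hind : ∀ x : E3, Set.indicator {y : E3 | 0 < ⟪φ, y⟫} (fun _ => (1 : ℝ)) (R x)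
        = Set.indicator {y : E3 | 0 < ⟪φ, y⟫} (fun _ => (1 : ℝ)) x := by
      intro x
      simp only [Set.indicator_apply, mem_setOf_eq, h1]
    simp only [hind, h2, mul_neg] at h
    rw [integral_neg] at h
    linarith

/-- Integrability of our indicator-type integrands on the ball. -/
lemma aux_int_ind_mul (φ : E3) {q : E3 → ℝ} (hq : Measurable q) (C : ℝ)
    (hC : ∀ x ∈ ball (0 : E3) 1, |q x| ≤ C) :
    IntegrableOn (fun x : E3 =>
      Set.indicator {y : E3 | 0 < ⟪φ, y⟫} (fun _ => (1 : ℝ)) x * q x)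
      (ball (0 : E3) 1) volume := by
  have hmeas : Measurable fun x : E3 =>
      Set.indicator {y : E3 | 0 < ⟪φ, y⟫} (fun _ => (1 : ℝ)) x * q x := by
    refine Measurable.mul ?_ hq
    exact measurable_const.indicator
      ((isOpen_lt continuous_const (continuous_const.inner continuous_id)).measurableSet)
  refine aux_integrableOn_ball hmeas.aestronglyMeasurable |C| fun x hx => ?_
  rw [abs_mul]
  calc |Set.indicator {y : E3 | 0 < ⟪φ, y⟫} (fun _ => (1 : ℝ)) x| * |q x|
      ≤ 1 * |C| := by
        refine mul_le_mul ?_ ((hC x hx).trans (le_abs_self C)) (abs_nonneg _) zero_le_one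
        unfold Set.indicator
        split <;> simp
    _ = |C| := one_mul _

lemma aux_meas_inner (v : E3) : Measurable fun x : E3 => ⟪v, x⟫ :=
  (continuous_const.inner continuous_id).measurable

lemma aux_inner_bound (v : E3) : ∀ x ∈ ball (0 : E3) 1, |⟪v, x⟫| ≤ ‖v‖ := by
  intro x hx
  calc |⟪v, x⟫| ≤ ‖v‖ * ‖x‖ := abs_real_inner_le_norm v x
    _ ≤ ‖v‖ * 1 := by
        refine mul_le_mul_of_nonneg_left ?_ (norm_nonneg v)
        exact le_of_lt (mem_ball_zero_iff.1 hx)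
    _ = ‖v‖ := mul_one _

/-- Half-space integral of `|⟪v, x⟫|` over the ball. -/
lemma aux_B (φ v : E3) (hφ : φ ≠ 0) (hv : ‖v‖ = 1) :
    ∫ x in ball (0 : E3) 1,
      Set.indicator {y : E3 | 0 < ⟪φ, y⟫} (fun _ => (1 : ℝ)) x * |⟪v, x⟫| = π / 4 := by
  set f := fun x : E3 => Set.indicator {y : E3 | 0 < ⟪φ, y⟫} (fun _ => (1 : ℝ)) x * |⟪v, x⟫|
    with hf
  set g := fun x : E3 => Set.indicator {y : E3 | ⟪φ, y⟫ < 0} (fun _ => (1 : ℝ)) x * |⟪v, x⟫|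
    with hg
  have hneg := aux_setIntegral_comp_lie (LinearIsometryEquiv.neg ℝ (E := E3)) f
  have hcomp : ∀ x : E3, f ((LinearIsometryEquiv.neg ℝ (E := E3)) x) = g x := by
    intro x
    have happ : (LinearIsometryEquiv.neg ℝ (E := E3)) x = -x := rfl
    simp only [hf, hg, happ, Set.indicator_apply, mem_setOf_eq,
      inner_neg_right, abs_neg, neg_pos]
  simp only [hcomp] at hneg
  have hfint : IntegrableOn f (ball (0 : E3) 1) volume :=
    aux_int_ind_mul φ (aux_meas_inner v).abs 1 (fun x hx => by
      rw [abs_abs]; simpa [hv] using aux_inner_bound v x hx)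
  have hgint : IntegrableOn g (ball (0 : E3) 1) volume := by
    have hmeas : Measurable g := by
      refine Measurable.mul ?_ (aux_meas_inner v).abs
      exact measurable_const.indicator
        ((isOpen_lt (continuous_const.inner continuous_id) continuous_const).measurableSet)
    refine aux_integrableOn_ball hmeas.aestronglyMeasurable 1 fun x hx => ?_
    rw [hg, abs_mul]
    calc |Set.indicator {y : E3 | ⟪φ, y⟫ < 0} (fun _ => (1 : ℝ)) x| * |(|⟪v, x⟫|)|
        ≤ 1 * 1 := by
          refine mul_le_mul ?_ ?_ (abs_nonneg _) zero_le_one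
          · unfold Set.indicator; split <;> simp
          · rw [abs_abs]; simpa [hv] using aux_inner_bound v x hx
      _ = 1 := one_mul _
  have hae : (fun x : E3 => f x + g x) =ᵐ[volume.restrict (ball (0 : E3) 1)]
      (fun x : E3 => |⟪v, x⟫|) := by
    refine ae_restrict_of_ae ?_
    have hnull : volume {y : E3 | ⟪φ, y⟫ = 0} = 0 := aux_hyperplane φ hφ
    filter_upwards [(ae_iff (p := fun y : E3 => ⟪φ, y⟫ ≠ 0)).2 (by simpa using hnull)]
      with x hx
    show ({y : E3 | 0 < ⟪φ, y⟫}.indicator (fun _ => (1 : ℝ)) x * |⟪v, x⟫|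
        + {y : E3 | ⟪φ, y⟫ < 0}.indicator (fun _ => (1 : ℝ)) x * |⟪v, x⟫|) = |⟪v, x⟫|
    rcases lt_trichotomy (⟪φ, x⟫) 0 with h | h | h
    · rw [Set.indicator_of_notMem (show x ∉ {y : E3 | 0 < ⟪φ, y⟫} from not_lt.2 h.le),
        Set.indicator_of_mem (show x ∈ {y : E3 | ⟪φ, y⟫ < 0} from h)]
      ring
    · exact absurd h hx
    · rw [Set.indicator_of_mem (show x ∈ {y : E3 | 0 < ⟪φ, y⟫} from h),
        Set.indicator_of_notMem (show x ∉ {y : E3 | ⟪φ, y⟫ < 0} from not_lt.2 h.le)]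
      ring
  have hsum : ∫ x in ball (0 : E3) 1, (f x + g x) = π / 2 := by
    rw [integral_congr_ae hae, aux_P v hv]
  rw [integral_add hfint hgint] at hsum
  have hEq : ∫ x in ball (0 : E3) 1, g x = ∫ x in ball (0 : E3) 1, f x := hneg
  show ∫ x in ball (0 : E3) 1, f x = π / 4
  linarith

/-- Half-space moment of `φ` itself over the ball. -/
lemma aux_Aphi (φ : E3) (hφ : ‖φ‖ = 1) :
    ∫ x in ball (0 : E3) 1,
      Set.indicator {y : E3 | 0 < ⟪φ, y⟫} (fun _ => (1 : ℝ)) x * ⟪φ, x⟫ = π / 4 := by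
  have hpt : ∀ x : E3, Set.indicator {y : E3 | 0 < ⟪φ, y⟫} (fun _ => (1 : ℝ)) x * ⟪φ, x⟫
      = (⟪φ, x⟫ + |⟪φ, x⟫|) / 2 := by
    intro x
    by_cases h : 0 < ⟪φ, x⟫
    · rw [Set.indicator_of_mem (show x ∈ {y : E3 | 0 < ⟪φ, y⟫} from h), abs_of_pos h]
      ring
    · rw [Set.indicator_of_notMem (show x ∉ {y : E3 | 0 < ⟪φ, y⟫} from h), zero_mul,
        abs_of_nonpos (not_lt.1 h)]
      ring
  simp only [hpt]
  have hint1 : IntegrableOn (fun x : E3 => ⟪φ, x⟫) (ball (0 : E3) 1) volume :=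
    aux_integrableOn_ball (aux_meas_inner φ).aestronglyMeasurable 1
      (fun x hx => by simpa [hφ] using aux_inner_bound φ x hx)
  have hint2 : IntegrableOn (fun x : E3 => |⟪φ, x⟫|) (ball (0 : E3) 1) volume :=
    aux_integrableOn_ball (aux_meas_inner φ).abs.aestronglyMeasurable 1
      (fun x hx => by rw [abs_abs]; simpa [hφ] using aux_inner_bound φ x hx)
  rw [integral_div, integral_add hint1 hint2, aux_Z, aux_P φ hφ]
  ring

/-- The full ball integral for the Kochen-Specker model. -/
lemma aux_K (ψ φ : E3) (hψ : ‖ψ‖ = 1) (hφ : ‖φ‖ = 1) :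
    ∫ x in ball (0 : E3) 1,
      Set.indicator {y : E3 | 0 < ⟪φ, y⟫} (fun _ => (1 : ℝ)) x * max ⟪ψ, x⟫ 0
      = π * (1 + ⟪ψ, φ⟫) / 8 := by
  have hφ0 : φ ≠ 0 := fun h => by simp [h] at hφ
  set c : ℝ := ⟪ψ, φ⟫ with hc
  set w : E3 := ψ - c • φ with hwdef
  have hφφ : ⟪φ, φ⟫ = 1 := by
    rw [real_inner_self_eq_norm_sq, hφ]; norm_num
  have hwφ : ⟪w, φ⟫ = 0 := by
    rw [hwdef, inner_sub_left, real_inner_smul_left, hφφ]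
    simp [hc, real_inner_comm]
  have hdecomp : ∀ x : E3, ⟪ψ, x⟫ = c * ⟪φ, x⟫ + ⟪w, x⟫ := by
    intro x
    rw [hwdef, inner_sub_left, real_inner_smul_left]
    ring
  have hpt : ∀ x : E3,
      Set.indicator {y : E3 | 0 < ⟪φ, y⟫} (fun _ => (1 : ℝ)) x * max ⟪ψ, x⟫ 0
      = (c * (Set.indicator {y : E3 | 0 < ⟪φ, y⟫} (fun _ => (1 : ℝ)) x * ⟪φ, x⟫)
        + Set.indicator {y : E3 | 0 < ⟪φ, y⟫} (fun _ => (1 : ℝ)) x * ⟪w, x⟫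
        + Set.indicator {y : E3 | 0 < ⟪φ, y⟫} (fun _ => (1 : ℝ)) x * |⟪ψ, x⟫|) / 2 := by
    intro x
    have hmax : max ⟪ψ, x⟫ 0 = (⟪ψ, x⟫ + |⟪ψ, x⟫|) / 2 := by
      rcases le_or_gt (⟪ψ, x⟫) 0 with h | h
      · rw [max_eq_right h, abs_of_nonpos h]; ring
      · rw [max_eq_left h.le, abs_of_pos h]; ring
    rw [hmax, hdecomp x]
    ring
  simp only [hpt]
  have hint1 : IntegrableOn (fun x : E3 =>
      c * (Set.indicator {y : E3 | 0 < ⟪φ, y⟫} (fun _ => (1 : ℝ)) x * ⟪φ, x⟫))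
      (ball (0 : E3) 1) volume :=
    (aux_int_ind_mul φ (aux_meas_inner φ) 1
      (fun x hx => by simpa [hφ] using aux_inner_bound φ x hx)).const_mul c
  have hint2 : IntegrableOn (fun x : E3 =>
      Set.indicator {y : E3 | 0 < ⟪φ, y⟫} (fun _ => (1 : ℝ)) x * ⟪w, x⟫)
      (ball (0 : E3) 1) volume :=
    aux_int_ind_mul φ (aux_meas_inner w) ‖w‖ (aux_inner_bound w)
  have hint3 : IntegrableOn (fun x : E3 =>
      Set.indicator {y : E3 | 0 < ⟪φ, y⟫} (fun _ => (1 : ℝ)) x * |⟪ψ, x⟫|)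
      (ball (0 : E3) 1) volume :=
    aux_int_ind_mul φ (aux_meas_inner ψ).abs 1
      (fun x hx => by rw [abs_abs]; simpa [hψ] using aux_inner_bound ψ x hx)
  have hint12 : IntegrableOn (fun x : E3 =>
      c * (Set.indicator {y : E3 | 0 < ⟪φ, y⟫} (fun _ => (1 : ℝ)) x * ⟪φ, x⟫)
      + Set.indicator {y : E3 | 0 < ⟪φ, y⟫} (fun _ => (1 : ℝ)) x * ⟪w, x⟫)
      (ball (0 : E3) 1) volume := hint1.add hint2
  rw [integral_div, integral_add hint12 hint3, integral_add hint1 hint2,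
    integral_const_mul, aux_Aphi φ hφ, aux_refl φ w hwφ, aux_B φ ψ hφ0 hψ]
  ring

/-- The radial integral of our profile function. -/
lemma aux_radial :
    ∫ r in Set.Ioi (0 : ℝ), r ^ 2 * (Set.Iio (1 : ℝ)).indicator id r = 1 / 4 := by
  have hpt : ∀ r : ℝ, r ^ 2 * (Set.Iio (1 : ℝ)).indicator id r
      = (Set.Iio (1 : ℝ)).indicator (fun s => s ^ 3) r := by
    intro r
    by_cases h : r ∈ Set.Iio (1 : ℝ)
    · rw [Set.indicator_of_mem h, Set.indicator_of_mem h]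
      simp only [id]
      ring
    · rw [Set.indicator_of_notMem h, Set.indicator_of_notMem h, mul_zero]
  simp only [hpt]
  rw [setIntegral_indicator measurableSet_Iio,
    show Set.Ioi (0 : ℝ) ∩ Set.Iio 1 = Set.Ioo 0 1 from Set.Ioi_inter_Iio,
    ← integral_Ioc_eq_integral_Ioo, ← intervalIntegral.integral_of_le zero_le_one,
    integral_pow]
  norm_num

/-- Polar-coordinates bridge between the sphere integral and a space integral. -/
lemma aux_bridge (f : E3 → ℝ) (g : (sphere (0 : E3) 1) → ℝ) (h : ℝ → ℝ)
    (hfg : ∀ (l : sphere (0 : E3) 1) (r : Set.Ioi (0 : ℝ)),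
      f ((r : ℝ) • (l : E3)) = g l * h r) :
    ∫ x, f x = (∫ l, g l ∂(volume : Measure E3).toSphere)
      * ∫ r in Set.Ioi (0 : ℝ), r ^ 2 * h r := by
  have hdim : Module.finrank ℝ E3 = 3 := finrank_euclideanSpace_fin
  have hmp := (volume : Measure E3).measurePreserving_homeomorphUnitSphereProd
  rw [hdim] at hmp
  norm_num at hmp
  have step1 : ∫ x, f x ∂(volume : Measure E3)
      = ∫ x : ({(0 : E3)}ᶜ : Set E3), f x ∂((volume : Measure E3).comap Subtype.val) := by
    rw [integral_subtype_comap (measurableSet_singleton _).compl, restrict_compl_singleton]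
  have step2 := hmp.integral_comp (Homeomorph.measurableEmbedding _)
    (fun p : (sphere (0 : E3) 1) × Set.Ioi (0 : ℝ) => g p.1 * h p.2)
  have hptw : ∀ x : ({(0 : E3)}ᶜ : Set E3),
      g ((homeomorphUnitSphereProd E3) x).1 * h (((homeomorphUnitSphereProd E3) x).2 : ℝ)
      = f x := by
    intro x
    rw [← hfg]
    congr 1
    have := congrArg Subtype.val ((homeomorphUnitSphereProd E3).symm_apply_apply x)
    rwa [homeomorphUnitSphereProd_symm_apply_coe] at this
  rw [step1, ← integral_congr_ae (ae_of_all _ hptw), step2,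
    integral_prod_mul g (fun r : Set.Ioi (0 : ℝ) => h r)]
  congr 1
  simp only [Measure.volumeIoiPow, ENNReal.ofReal]
  rw [integral_withDensity_eq_integral_smul
    ((measurable_subtype_coe.pow_const _).real_toNNReal) (fun r : Set.Ioi (0 : ℝ) => h r),
    integral_subtype_comap measurableSet_Ioi (fun a : ℝ => Real.toNNReal (a ^ 2) • h a)]
  refine setIntegral_congr_fun measurableSet_Ioi fun x hx => ?_
  rw [NNReal.smul_def, Real.coe_toNNReal _ (pow_nonneg hx.out.le _), smul_eq_mul]

end Aux

/-- The unit sphere S² in ℝ³. -/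
abbrev S2 : Set (EuclideanSpace ℝ (Fin 3)) := Metric.sphere (0 : EuclideanSpace ℝ (Fin 3)) 1

/-- The surface measure on the unit sphere S² ⊂ ℝ³ (total measure 4π). -/
noncomputable def sphereMeasure : Measure (S2 : Set (EuclideanSpace ℝ (Fin 3))) :=
  (volume : Measure (EuclideanSpace ℝ (Fin 3))).toSphere

/-- **The Kochen–Specker model reproduces the Born rule.** For unit Bloch vectors ψ, φ ∈ ℝ³,
(1/π) ∫_{S²} 1_{φ·λ>0}(λ) · max(ψ·λ, 0) dσ(λ) = (1 + ψ·φ)/2 = |⟨ψ|φ⟩|². -/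
theorem kochenSpecker_born_rule (ψ φ : EuclideanSpace ℝ (Fin 3))
    (hψ : ‖ψ‖ = 1) (hφ : ‖φ‖ = 1) :
    (1 / π) * ∫ l : S2,
        Set.indicator {l : S2 | 0 < (inner ℝ φ (l : EuclideanSpace ℝ (Fin 3)) : ℝ)}
          (fun _ => (1 : ℝ)) l
        * max (inner ℝ ψ (l : EuclideanSpace ℝ (Fin 3)) : ℝ) 0 ∂sphereMeasure
      = (1 + (inner ℝ ψ φ : ℝ)) / 2 := by
  classical
  set c : ℝ := (inner ℝ ψ φ : ℝ) with hc
  set g : (Metric.sphere (0 : EuclideanSpace ℝ (Fin 3)) 1) → ℝ := fun l =>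
    Set.indicator {l : S2 | 0 < (inner ℝ φ (l : EuclideanSpace ℝ (Fin 3)) : ℝ)}
      (fun _ => (1 : ℝ)) l * max (inner ℝ ψ (l : EuclideanSpace ℝ (Fin 3)) : ℝ) 0 with hgdef
  set f : EuclideanSpace ℝ (Fin 3) → ℝ :=
    (Metric.ball (0 : EuclideanSpace ℝ (Fin 3)) 1).indicator
      (fun y => Set.indicator {z : EuclideanSpace ℝ (Fin 3) | 0 < (inner ℝ φ z : ℝ)}
        (fun _ => (1 : ℝ)) y * max (inner ℝ ψ y : ℝ) 0) with hfdef
  have hfg : ∀ (l : Metric.sphere (0 : EuclideanSpace ℝ (Fin 3)) 1) (r : Set.Ioi (0 : ℝ)),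
      f ((r : ℝ) • (l : EuclideanSpace ℝ (Fin 3))) = g l * (Set.Iio (1 : ℝ)).indicator id r := by
    intro l r
    have hr : (0 : ℝ) < r := r.2
    have hl : ‖(l : EuclideanSpace ℝ (Fin 3))‖ = 1 := mem_sphere_zero_iff_norm.1 l.2
    have hnorm : ‖(r : ℝ) • (l : EuclideanSpace ℝ (Fin 3))‖ = r := by
      rw [norm_smul, hl, mul_one, Real.norm_eq_abs, abs_of_pos hr]
    have hipφ : (inner ℝ φ ((r : ℝ) • (l : EuclideanSpace ℝ (Fin 3))) : ℝ)
        = r * (inner ℝ φ (l : EuclideanSpace ℝ (Fin 3)) : ℝ) := real_inner_smul_right _ _ _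
    have hipψ : (inner ℝ ψ ((r : ℝ) • (l : EuclideanSpace ℝ (Fin 3))) : ℝ)
        = r * (inner ℝ ψ (l : EuclideanSpace ℝ (Fin 3)) : ℝ) := real_inner_smul_right _ _ _
    have hind : Set.indicator {z : EuclideanSpace ℝ (Fin 3) | 0 < (inner ℝ φ z : ℝ)}
          (fun _ => (1 : ℝ)) ((r : ℝ) • (l : EuclideanSpace ℝ (Fin 3)))
        = Set.indicator {l : S2 | 0 < (inner ℝ φ (l : EuclideanSpace ℝ (Fin 3)) : ℝ)}
          (fun _ => (1 : ℝ)) l := by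
      by_cases h : 0 < (inner ℝ φ (l : EuclideanSpace ℝ (Fin 3)) : ℝ)
      · rw [Set.indicator_of_mem (show (r : ℝ) • (l : EuclideanSpace ℝ (Fin 3)) ∈
            {z : EuclideanSpace ℝ (Fin 3) | 0 < (inner ℝ φ z : ℝ)} from by
            rw [Set.mem_setOf_eq, hipφ]; positivity),
          Set.indicator_of_mem (show l ∈ {l : S2 | 0 < (inner ℝ φ
            (l : EuclideanSpace ℝ (Fin 3)) : ℝ)} from h)]
      · push_neg at h
        rw [Set.indicator_of_notMem (show (r : ℝ) • (l : EuclideanSpace ℝ (Fin 3)) ∉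
            {z : EuclideanSpace ℝ (Fin 3) | 0 < (inner ℝ φ z : ℝ)} from by
            rw [Set.mem_setOf_eq, hipφ, not_lt]
            exact mul_nonpos_of_nonneg_of_nonpos hr.le h),
          Set.indicator_of_notMem (show l ∉ {l : S2 | 0 < (inner ℝ φ
            (l : EuclideanSpace ℝ (Fin 3)) : ℝ)} from not_lt.2 h)]
    have hmax : max (inner ℝ ψ ((r : ℝ) • (l : EuclideanSpace ℝ (Fin 3))) : ℝ) 0
        = r * max (inner ℝ ψ (l : EuclideanSpace ℝ (Fin 3)) : ℝ) 0 := by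
      rw [hipψ, mul_max_of_nonneg _ _ hr.le, mul_zero]
    by_cases hrlt : (r : ℝ) < 1
    · rw [hfdef]
      rw [Set.indicator_of_mem (show (r : ℝ) • (l : EuclideanSpace ℝ (Fin 3)) ∈
          Metric.ball (0 : EuclideanSpace ℝ (Fin 3)) 1 from by
          rw [mem_ball_zero_iff, hnorm]; exact hrlt),
        Set.indicator_of_mem (show (r : ℝ) ∈ Set.Iio (1 : ℝ) from hrlt)]
      rw [hind, hmax, hgdef]
      simp only [id]
      ring
    · rw [hfdef]
      rw [Set.indicator_of_notMem (show (r : ℝ) • (l : EuclideanSpace ℝ (Fin 3)) ∉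
          Metric.ball (0 : EuclideanSpace ℝ (Fin 3)) 1 from by
          rw [mem_ball_zero_iff, hnorm]; exact hrlt),
        Set.indicator_of_notMem (show (r : ℝ) ∉ Set.Iio (1 : ℝ) from hrlt)]
      rw [mul_zero]
  have hbridge := aux_bridge f g ((Set.Iio (1 : ℝ)).indicator id) hfg
  rw [aux_radial] at hbridge
  have hf_ball : ∫ x, f x = π * (1 + c) / 8 := by
    rw [hfdef, integral_indicator measurableSet_ball]
    exact aux_K ψ φ hψ hφ
  have hσ : ∫ l, g l ∂(volume : Measure (EuclideanSpace ℝ (Fin 3))).toSphere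
      = π * (1 + c) / 2 := by
    rw [hf_ball] at hbridge
    linarith
  show (1 / π) * ∫ l, g l ∂sphereMeasure = (1 + c) / 2
  rw [show sphereMeasure = (volume : Measure (EuclideanSpace ℝ (Fin 3))).toSphere from rfl, hσ]
  field_simp
end

section
/- Let ψ, φ ∈ ℝ³ be unit vectors with ψ·φ > −1, and let σ be the surface measure on the unit sphere S² ⊂ ℝ³. Then σ({λ ∈ S² : ψ·λ > 0 and φ·λ > 0}) > 0; in particular the densities λ ↦ (1/π)max(ψ·λ,0) and λ ↦ (1/π)max(φ·λ,0) are simultaneously strictly positive on a set of positive σ-measure. (This shows that the Kochen–Specker model is ψ-epistemic: the epistemic states of any two nonorthogonal quantum states — i.e. those whose Bloch vectors are not antipodal — have overlapping supports.) -/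
open MeasureTheory Metric Real Pointwise

/-- **The Kochen–Specker model is ψ-epistemic.** For unit Bloch vectors ψ, φ ∈ ℝ³ with
ψ·φ > −1 (i.e. nonorthogonal qubit states), the set where both epistemic densities
(1/π)max(ψ·λ,0) and (1/π)max(φ·λ,0) are strictly positive—namely
{λ ∈ S² : ψ·λ > 0 and φ·λ > 0}—has positive surface measure. -/
theorem kochenSpecker_psi_epistemic (ψ φ : EuclideanSpace ℝ (Fin 3))
    (hψ : ‖ψ‖ = 1) (hφ : ‖φ‖ = 1) (h : (-1 : ℝ) < (inner ℝ ψ φ : ℝ)) :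
    0 < sphereMeasure {l : S2 |
        0 < (inner ℝ ψ (l : EuclideanSpace ℝ (Fin 3)) : ℝ) ∧
        0 < (inner ℝ φ (l : EuclideanSpace ℝ (Fin 3)) : ℝ)} := by
  set s : Set (S2 : Set (EuclideanSpace ℝ (Fin 3))) := {l : S2 |
        0 < (inner ℝ ψ (l : EuclideanSpace ℝ (Fin 3)) : ℝ) ∧
        0 < (inner ℝ φ (l : EuclideanSpace ℝ (Fin 3)) : ℝ)} with hs_def
  have hcψ : Continuous fun x : EuclideanSpace ℝ (Fin 3) => (inner ℝ ψ x : ℝ) :=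
    continuous_const.inner continuous_id
  have hcφ : Continuous fun x : EuclideanSpace ℝ (Fin 3) => (inner ℝ φ x : ℝ) :=
    continuous_const.inner continuous_id
  have hVψ : IsOpen {x : EuclideanSpace ℝ (Fin 3) | 0 < (inner ℝ ψ x : ℝ)} :=
    isOpen_Ioi.preimage hcψ
  have hVφ : IsOpen {x : EuclideanSpace ℝ (Fin 3) | 0 < (inner ℝ φ x : ℝ)} :=
    isOpen_Ioi.preimage hcφ
  have h1 : IsOpen ({x : EuclideanSpace ℝ (Fin 3) | 0 < (inner ℝ ψ x : ℝ)} ∩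
      {x : EuclideanSpace ℝ (Fin 3) | 0 < (inner ℝ φ x : ℝ)}) := hVψ.inter hVφ
  have hopen : IsOpen s := h1.preimage continuous_subtype_val
  have hmeas : MeasurableSet s := hopen.measurableSet
  rw [sphereMeasure, Measure.toSphere_apply' _ hmeas]
  set U : Set (EuclideanSpace ℝ (Fin 3)) :=
    {x | ‖x‖ < 1} ∩ ({x | 0 < (inner ℝ ψ x : ℝ)} ∩ {x | 0 < (inner ℝ φ x : ℝ)}) with hU_def
  have hUopen : IsOpen U := (isOpen_lt continuous_norm continuous_const).inter h1
  have hsum_ψ : (0 : ℝ) < inner ℝ ψ (ψ + φ) := by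
    rw [inner_add_right, real_inner_self_eq_norm_sq, hψ]
    linarith
  have hsum_φ : (0 : ℝ) < inner ℝ φ (ψ + φ) := by
    rw [inner_add_right, real_inner_self_eq_norm_sq, hφ, real_inner_comm]
    linarith
  have hx0 : ((1:ℝ)/4) • (ψ + φ) ∈ U := by
    refine ⟨?_, ?_, ?_⟩
    · show ‖((1:ℝ)/4) • (ψ + φ)‖ < 1
      rw [norm_smul]
      have h2 : ‖ψ + φ‖ ≤ 2 := by
        calc ‖ψ + φ‖ ≤ ‖ψ‖ + ‖φ‖ := norm_add_le _ _
        _ = 2 := by rw [hψ, hφ]; norm_num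
      have h3 : ‖(1:ℝ)/4‖ = 1/4 := by rw [Real.norm_eq_abs]; norm_num
      rw [h3]
      nlinarith [norm_nonneg (ψ + φ)]
    · show 0 < (inner ℝ ψ (((1:ℝ)/4) • (ψ + φ)) : ℝ)
      rw [inner_smul_right]; positivity
    · show 0 < (inner ℝ φ (((1:ℝ)/4) • (ψ + φ)) : ℝ)
      rw [inner_smul_right]; positivity
  have hUsub : U ⊆ Set.Ioo (0:ℝ) 1 • (Subtype.val '' s) := by
    rintro x ⟨hx1, hx2, hx3⟩
    have hxne : x ≠ 0 := fun hx0' => by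
      simp only [hx0', Set.mem_setOf_eq, inner_zero_right, lt_irrefl] at hx2
    have hnx : 0 < ‖x‖ := norm_pos_iff.2 hxne
    have hmem : (‖x‖⁻¹ • x) ∈ (S2 : Set (EuclideanSpace ℝ (Fin 3))) := by
      simp only [S2, mem_sphere_iff_norm, sub_zero, norm_smul, norm_inv, norm_norm]
      field_simp
    refine Set.mem_smul.2 ⟨‖x‖, ⟨hnx, hx1⟩, ‖x‖⁻¹ • x, ?_, ?_⟩
    · refine ⟨⟨‖x‖⁻¹ • x, hmem⟩, ?_, rfl⟩
      have hinv : (0:ℝ) < ‖x‖⁻¹ := inv_pos.2 hnx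
      constructor
      · show 0 < (inner ℝ ψ (‖x‖⁻¹ • x) : ℝ)
        rw [inner_smul_right]; exact mul_pos hinv hx2
      · show 0 < (inner ℝ φ (‖x‖⁻¹ • x) : ℝ)
        rw [inner_smul_right]; exact mul_pos hinv hx3
    · rw [smul_smul]
      field_simp
      exact one_smul ℝ x
  have hUpos : 0 < volume U := hUopen.measure_pos volume ⟨_, hx0⟩
  have hpos := hUpos.trans_le (measure_mono hUsub)
  have hdim : (Module.finrank ℝ (EuclideanSpace ℝ (Fin 3)) : ENNReal) ≠ 0 := by
    simp [finrank_euclideanSpace]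
  exact ENNReal.mul_pos hdim hpos.ne'
end

section
/- Let φ, w ∈ ℝ³ be unit vectors and let σ be the surface measure on the unit sphere S² ⊂ ℝ³ (total measure 4π). Then (1/(4π)) ∫_{S²} 1_{{φ·(w + λ) > 0}}(λ) dσ(λ) = (1 + φ·w)/2. (This is the computation showing both that the Bell–Mermin model reproduces the quantum Born rule p(φ|ψ) = |⟨ψ|φ⟩|² = (1 + φ·ψ)/2, taking w = ψ, and that marginalizing the Bell–Mermin indicator function over the hidden variable λ'' recovers the indicator function (1 + φ·λ')/2 of the Beltrametti–Bugajski model, taking w = λ'.) -/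
open MeasureTheory Metric Real

open Set Pointwise
open scoped ENNReal

noncomputable section BellMerminAux

lemma measurable_q : Measurable fun y : Fin 2 → ℝ => y 0 ^ 2 + y 1 ^ 2 := by fun_prop

lemma disk_vol (B : ℝ) (hB : 0 ≤ B) :
    volume {y : Fin 2 → ℝ | y 0 ^ 2 + y 1 ^ 2 < B} = ENNReal.ofReal (π * B) := by
  have hset : {y : Fin 2 → ℝ | y 0 ^ 2 + y 1 ^ 2 < B}
      = (MeasurableEquiv.toLp 2 (Fin 2 → ℝ)).symm.symm ⁻¹' (Metric.ball 0 (Real.sqrt B)) := by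
    ext y
    simp only [Set.mem_setOf_eq, Set.mem_preimage, mem_ball, dist_zero_right]
    rw [EuclideanSpace.norm_eq]
    have : ((MeasurableEquiv.toLp 2 (Fin 2 → ℝ)).symm.symm y : EuclideanSpace ℝ (Fin 2)) = WithLp.toLp 2 (fun i => y i) := rfl
    rw [this]
    simp only [Real.norm_eq_abs, sq_abs, Fin.sum_univ_two]
    rw [Real.sqrt_lt_sqrt_iff (by positivity)]
  rw [hset, ((EuclideanSpace.volume_preserving_symm_measurableEquiv_toLp (Fin 2)).symm _).measure_preimage
    measurableSet_ball.nullMeasurableSet, EuclideanSpace.volume_ball]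
  simp only [Fintype.card_fin]
  rw [show ((2:ℕ):ℝ)/2 + 1 = 2 by norm_num, Real.Gamma_two]
  rw [← ENNReal.ofReal_pow (Real.sqrt_nonneg B), Real.sq_sqrt hB, div_one,
    show Real.sqrt π ^ 2 = π from Real.sq_sqrt Real.pi_pos.le, ← ENNReal.ofReal_mul hB, mul_comm]

lemma closedDisk_vol (A : ℝ) (hA : 0 ≤ A) :
    volume {y : Fin 2 → ℝ | y 0 ^ 2 + y 1 ^ 2 ≤ A} = ENNReal.ofReal (π * A) := by
  have hset : {y : Fin 2 → ℝ | y 0 ^ 2 + y 1 ^ 2 ≤ A}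
      = (MeasurableEquiv.toLp 2 (Fin 2 → ℝ)).symm.symm ⁻¹' (Metric.closedBall 0 (Real.sqrt A)) := by
    ext y
    simp only [Set.mem_setOf_eq, Set.mem_preimage, mem_closedBall, dist_zero_right]
    rw [EuclideanSpace.norm_eq]
    have : ((MeasurableEquiv.toLp 2 (Fin 2 → ℝ)).symm.symm y : EuclideanSpace ℝ (Fin 2)) = WithLp.toLp 2 (fun i => y i) := rfl
    rw [this]
    simp only [Real.norm_eq_abs, sq_abs, Fin.sum_univ_two]
    rw [Real.sqrt_le_sqrt_iff hA]
  rw [hset, ((EuclideanSpace.volume_preserving_symm_measurableEquiv_toLp (Fin 2)).symm _).measure_preimage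
    measurableSet_closedBall.nullMeasurableSet, EuclideanSpace.volume_closedBall]
  simp only [Fintype.card_fin]
  rw [show ((2:ℕ):ℝ)/2 + 1 = 2 by norm_num, Real.Gamma_two]
  rw [← ENNReal.ofReal_pow (Real.sqrt_nonneg A), Real.sq_sqrt hA, div_one,
    show Real.sqrt π ^ 2 = π from Real.sq_sqrt Real.pi_pos.le, ← ENNReal.ofReal_mul hA, mul_comm]

lemma annulus_vol (A B : ℝ) (hA : 0 ≤ A) (hAB : A ≤ B) :
    volume {y : Fin 2 → ℝ | A < y 0 ^ 2 + y 1 ^ 2 ∧ y 0 ^ 2 + y 1 ^ 2 < B}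
      = ENNReal.ofReal (π * (B - A)) := by
  rcases eq_or_lt_of_le hAB with rfl | hlt
  · have : {y : Fin 2 → ℝ | A < y 0 ^ 2 + y 1 ^ 2 ∧ y 0 ^ 2 + y 1 ^ 2 < A} = ∅ := by
      ext y; simp only [Set.mem_setOf_eq, Set.mem_empty_iff_false, iff_false, not_and]
      intro h1 h2; exact absurd (h1.trans h2) (lt_irrefl A)
    simp [this]
  · have hd : {y : Fin 2 → ℝ | A < y 0 ^ 2 + y 1 ^ 2 ∧ y 0 ^ 2 + y 1 ^ 2 < B}
        = {y : Fin 2 → ℝ | y 0 ^ 2 + y 1 ^ 2 < B} \ {y : Fin 2 → ℝ | y 0 ^ 2 + y 1 ^ 2 ≤ A} := by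
      ext y; simp only [Set.mem_setOf_eq, Set.mem_diff, not_le]; tauto
    have hsub : {y : Fin 2 → ℝ | y 0 ^ 2 + y 1 ^ 2 ≤ A} ⊆ {y : Fin 2 → ℝ | y 0 ^ 2 + y 1 ^ 2 < B} :=
      fun y hy => lt_of_le_of_lt hy hlt
    rw [hd, measure_diff hsub ((measurableSet_le measurable_q measurable_const).nullMeasurableSet)
        (by rw [closedDisk_vol A hA]; exact ENNReal.ofReal_ne_top),
      disk_vol B (hA.trans hAB), closedDisk_vol A hA,
      ← ENNReal.ofReal_sub _ (by positivity)]
    ring_nf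

def sl (c t : ℝ) : Set (Fin 2 → ℝ) :=
  {y | 0 < t ^ 2 + (y 0 ^ 2 + y 1 ^ 2) ∧ t ^ 2 + (y 0 ^ 2 + y 1 ^ 2) < 1 ∧
    c * Real.sqrt (t ^ 2 + (y 0 ^ 2 + y 1 ^ 2)) < t}

def Wc (c : ℝ) : Set (ℝ × (Fin 2 → ℝ)) :=
  {p | 0 < p.1 ^ 2 + (p.2 0 ^ 2 + p.2 1 ^ 2) ∧ p.1 ^ 2 + (p.2 0 ^ 2 + p.2 1 ^ 2) < 1 ∧
    c * Real.sqrt (p.1 ^ 2 + (p.2 0 ^ 2 + p.2 1 ^ 2)) < p.1}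

lemma Wc_measurable (c : ℝ) : MeasurableSet (Wc c) := by
  have h1 : Measurable fun p : ℝ × (Fin 2 → ℝ) => p.1 ^ 2 + (p.2 0 ^ 2 + p.2 1 ^ 2) := by fun_prop
  have h2 : Measurable fun p : ℝ × (Fin 2 → ℝ) =>
      c * Real.sqrt (p.1 ^ 2 + (p.2 0 ^ 2 + p.2 1 ^ 2)) := by fun_prop
  exact (measurableSet_lt measurable_const h1).inter
    ((measurableSet_lt h1 measurable_const).inter (measurableSet_lt h2 measurable_fst))

lemma sl_slice (c t : ℝ) : Prod.mk t ⁻¹' Wc c = sl c t := rfl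

lemma cone_vol_coord (c : ℝ) :
    volume {z : EuclideanSpace ℝ (Fin 3) | 0 < ‖z‖ ∧ ‖z‖ < 1 ∧ c * ‖z‖ < z 0}
      = ∫⁻ t, volume (sl c t) := by
  have key : {z : EuclideanSpace ℝ (Fin 3) | 0 < ‖z‖ ∧ ‖z‖ < 1 ∧ c * ‖z‖ < z 0}
      = (MeasurableEquiv.toLp 2 (Fin 3 → ℝ)).symm ⁻¹'
        ((MeasurableEquiv.piFinSuccAbove (fun _ : Fin 3 => ℝ) 0) ⁻¹' Wc c) := by
    ext z
    have hz : ‖z‖ = Real.sqrt (z 0 ^ 2 + (z 1 ^ 2 + z 2 ^ 2)) := by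
      rw [EuclideanSpace.norm_eq]
      simp only [Real.norm_eq_abs, sq_abs, Fin.sum_univ_three]
      ring_nf
    have happ : (MeasurableEquiv.piFinSuccAbove (fun _ : Fin 3 => ℝ) 0)
        ((MeasurableEquiv.toLp 2 (Fin 3 → ℝ)).symm z) = (z 0, fun j => z j.succ) := rfl
    simp only [Set.mem_setOf_eq, Set.mem_preimage, happ, Wc, hz]
    have h1 : (fun j : Fin 2 => z j.succ) 0 ^ 2 + (fun j : Fin 2 => z j.succ) 1 ^ 2
        = z 1 ^ 2 + z 2 ^ 2 := rfl
    rw [h1]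
    exact and_congr Real.sqrt_pos (and_congr
      ((Real.sqrt_lt' one_pos).trans (by rw [one_pow])) Iff.rfl)
  rw [key, (EuclideanSpace.volume_preserving_symm_measurableEquiv_toLp (Fin 3)).measure_preimage
      (((MeasurableEquiv.piFinSuccAbove (fun _ : Fin 3 => ℝ) 0).measurable
        (Wc_measurable c)).nullMeasurableSet),
    (volume_preserving_piFinSuccAbove (fun _ : Fin 3 => ℝ) 0).measure_preimage
      (Wc_measurable c).nullMeasurableSet,
    MeasureTheory.Measure.volume_eq_prod, Measure.prod_apply (Wc_measurable c)]
  simp only [sl_slice]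

lemma lint_neg (c : ℝ) (hc1 : -1 ≤ c) (hc0 : c ≤ 0) :
    ∫⁻ t, volume (sl c t) = ENNReal.ofReal (2 * π / 3 * (1 - c)) := by
  set f1 : ℝ → ℝ≥0∞ := fun t => ENNReal.ofReal (π * ((1 - t^2) - t^2*(1-c^2)/c^2)) with hf1
  set f2 : ℝ → ℝ≥0∞ := fun t => ENNReal.ofReal (π * (1 - t^2)) with hf2
  have hae : ∀ᵐ t : ℝ, volume (sl c t)
      = (Ioo c 0).indicator f1 t + (Ioo 0 1).indicator f2 t := by
    have hN : (volume : Measure ℝ) {c, 0} = 0 :=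
      ((Set.finite_singleton (0:ℝ)).insert c).countable.measure_zero _
    filter_upwards [measure_eq_zero_iff_ae_notMem.mp hN] with t ht
    simp only [Set.mem_insert_iff, Set.mem_singleton_iff, not_or] at ht
    obtain ⟨htc, ht0⟩ := ht
    rcases lt_trichotomy t 0 with htneg | h0 | htpos
    · -- t < 0
      rw [Set.indicator_of_notMem
        (show t ∉ Ioo (0:ℝ) 1 from fun h => absurd h.1 (not_lt.mpr htneg.le)) f2, add_zero]
      rcases eq_or_lt_of_le hc0 with hc | hc
      · -- c = 0
        have hsl : sl c t = ∅ := by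
          ext y; simp only [sl, Set.mem_setOf_eq, Set.mem_empty_iff_false, iff_false, not_and]
          intro _ _; rw [hc, zero_mul, not_lt]; exact htneg.le
        rw [hsl, Set.indicator_of_notMem
          (show t ∉ Ioo c 0 from fun h => absurd (hc ▸ h.1) (not_lt.mpr htneg.le)) f1]
        simp
      · -- c < 0
        by_cases hct : c < t
        · -- c < t < 0 : annulus
          have ht2 : (0:ℝ) < t^2 := by nlinarith
          have hc2 : (0:ℝ) < c^2 := by nlinarith
          have hA : t^2*(1-c^2)/c^2 = t^2/c^2 - t^2 := by rw [mul_sub, mul_one, sub_div, mul_div_assoc, div_self hc2.ne', mul_one]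
          have htc2 : t^2 < c^2 := by nlinarith
          have hdiv : t^2/c^2 < 1 := (div_lt_one hc2).mpr htc2
          have htcpos : 0 < t / c := div_pos_of_neg_of_neg htneg hc
          have hsl : sl c t = {y : Fin 2 → ℝ |
              t^2*(1-c^2)/c^2 < y 0 ^ 2 + y 1 ^ 2 ∧ y 0 ^ 2 + y 1 ^ 2 < 1 - t^2} := by
            ext y
            simp only [sl, Set.mem_setOf_eq]
            constructor
            · rintro ⟨h1, h2, h3⟩
              refine ⟨?_, by linarith⟩
              have h4 : t / c < Real.sqrt (t ^ 2 + (y 0 ^ 2 + y 1 ^ 2)) := by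
                rw [div_lt_iff_of_neg hc, mul_comm]; exact h3
              have h5 := (Real.lt_sqrt htcpos.le).mp h4
              rw [div_pow] at h5
              rw [hA]; linarith
            · rintro ⟨hAq, hqB⟩
              have hq0 : (0:ℝ) ≤ y 0 ^ 2 + y 1 ^ 2 := by positivity
              refine ⟨by linarith, by linarith, ?_⟩
              rw [← mul_comm, ← div_lt_iff_of_neg hc, Real.lt_sqrt htcpos.le, div_pow]
              rw [hA] at hAq; linarith
          rw [hsl, annulus_vol _ _
              (div_nonneg (mul_nonneg (sq_nonneg t) (by nlinarith)) (sq_nonneg c))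
              (by rw [hA]; linarith),
            Set.indicator_of_mem (Set.mem_Ioo.mpr ⟨hct, htneg⟩) f1, hf1]
        · -- t ≤ c
          have hsl : sl c t = ∅ := by
            ext y; simp only [sl, Set.mem_setOf_eq, Set.mem_empty_iff_false, iff_false, not_and]
            intro h1 h2
            have hs1 : Real.sqrt (t ^ 2 + (y 0 ^ 2 + y 1 ^ 2)) < 1 :=
              (Real.sqrt_lt' one_pos).mpr (by rw [one_pow]; exact h2)
            have h6 := mul_lt_mul_of_neg_left hs1 hc
            push_neg at hct
            rw [not_lt]
            nlinarith [Real.sqrt_nonneg (t ^ 2 + (y 0 ^ 2 + y 1 ^ 2))]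
          rw [hsl, Set.indicator_of_notMem (show t ∉ Ioo c 0 from fun h => hct h.1) f1]
          simp
    · exact absurd h0 ht0
    · -- t > 0
      rw [Set.indicator_of_notMem
        (show t ∉ Ioo c 0 from fun h => absurd h.2 (not_lt.mpr htpos.le)) f1, zero_add]
      by_cases ht1 : t < 1
      · have ht2 : (0:ℝ) < t^2 := by positivity
        have hsl : sl c t = {y : Fin 2 → ℝ | y 0 ^ 2 + y 1 ^ 2 < 1 - t^2} := by
          ext y
          simp only [sl, Set.mem_setOf_eq]
          constructor
          · rintro ⟨_, h2, _⟩; linarith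
          · intro h
            have hq0 : (0:ℝ) ≤ y 0 ^ 2 + y 1 ^ 2 := by positivity
            exact ⟨by linarith, by linarith,
              lt_of_le_of_lt (mul_nonpos_of_nonpos_of_nonneg hc0 (Real.sqrt_nonneg _)) htpos⟩
        rw [hsl, disk_vol _ (by nlinarith), Set.indicator_of_mem (Set.mem_Ioo.mpr ⟨htpos, ht1⟩) f2]
      · have hsl : sl c t = ∅ := by
          ext y; simp only [sl, Set.mem_setOf_eq, Set.mem_empty_iff_false, iff_false, not_and]
          intro _ h2
          push_neg at ht1
          have hq0 : (0:ℝ) ≤ y 0 ^ 2 + y 1 ^ 2 := by positivity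
          exfalso; nlinarith
        rw [hsl, Set.indicator_of_notMem
          (show t ∉ Ioo (0:ℝ) 1 from fun h => ht1 h.2) f2]
        simp
  have hm1 : Measurable f1 := Measurable.ennreal_ofReal (by fun_prop)
  rw [lintegral_congr_ae hae, lintegral_add_left (hm1.indicator measurableSet_Ioo),
    lintegral_indicator measurableSet_Ioo, lintegral_indicator measurableSet_Ioo]
  have e1 : ∫⁻ t in Ioo c 0, f1 t = ENNReal.ofReal (π * (-2*c/3)) := by
    rw [hf1]
    have hint : IntegrableOn (fun t => π*((1-t^2) - t^2*(1-c^2)/c^2)) (Ioo c 0) := by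
      exact ((by fun_prop : Continuous fun t : ℝ => π*((1-t^2) - t^2*(1-c^2)/c^2)).integrableOn_Icc).mono_set
        Ioo_subset_Icc_self
    have hnn : 0 ≤ᵐ[volume.restrict (Ioo c 0)]
        fun t => π*((1-t^2) - t^2*(1-c^2)/c^2) := by
      filter_upwards [ae_restrict_mem measurableSet_Ioo] with t ht
      obtain ⟨h1, h2⟩ := ht
      have hc : c < 0 := h1.trans h2
      have hc2 : (0:ℝ) < c^2 := by nlinarith
      have htc2 : t^2 < c^2 := by nlinarith
      have hdiv : t^2/c^2 < 1 := (div_lt_one hc2).mpr htc2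
      have hA : t^2*(1-c^2)/c^2 = t^2/c^2 - t^2 := by rw [mul_sub, mul_one, sub_div, mul_div_assoc, div_self hc2.ne', mul_one]
      have : (0:ℝ) ≤ (1-t^2) - t^2*(1-c^2)/c^2 := by rw [hA]; linarith
      positivity
    rw [← ofReal_integral_eq_lintegral_ofReal hint hnn]
    congr 1
    rw [← integral_Ioc_eq_integral_Ioo, ← intervalIntegral.integral_of_le hc0]
    have hfun : (fun t : ℝ => π*((1-t^2) - t^2*(1-c^2)/c^2))
        = fun t : ℝ => π - (π*(1+(1-c^2)/c^2)) * t^2 := by funext t; ring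
    rw [hfun, intervalIntegral.integral_sub intervalIntegrable_const
        ((intervalIntegral.intervalIntegrable_pow 2).const_mul _),
      intervalIntegral.integral_const, intervalIntegral.integral_const_mul, integral_pow]
    rcases eq_or_lt_of_le hc0 with hc | hc
    · rw [hc]; norm_num
    · have : c ≠ 0 := hc.ne
      field_simp
      ring
  have e2 : ∫⁻ t in Ioo 0 1, f2 t = ENNReal.ofReal (π * (2/3)) := by
    rw [hf2]
    have hint : IntegrableOn (fun t => π*(1-t^2)) (Ioo (0:ℝ) 1) := by
      exact ((by fun_prop : Continuous fun t : ℝ => π*(1-t^2)).integrableOn_Icc).mono_set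
        Ioo_subset_Icc_self
    have hnn : 0 ≤ᵐ[volume.restrict (Ioo (0:ℝ) 1)] fun t => π*(1-t^2) := by
      filter_upwards [ae_restrict_mem measurableSet_Ioo] with t ht
      obtain ⟨h1, h2⟩ := ht
      have : (0:ℝ) ≤ 1 - t^2 := by nlinarith
      positivity
    rw [← ofReal_integral_eq_lintegral_ofReal hint hnn]
    congr 1
    rw [← integral_Ioc_eq_integral_Ioo, ← intervalIntegral.integral_of_le (zero_le_one)]
    have hfun : (fun t : ℝ => π*(1-t^2)) = fun t : ℝ => π - π * t^2 := by funext t; ring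
    rw [hfun, intervalIntegral.integral_sub intervalIntegrable_const
        ((intervalIntegral.intervalIntegrable_pow 2).const_mul _),
      intervalIntegral.integral_const, intervalIntegral.integral_const_mul, integral_pow]
    norm_num
    ring
  rw [e1, e2, ← ENNReal.ofReal_add (by nlinarith [Real.pi_pos] : (0:ℝ) ≤ π * (-2*c/3))
    (by positivity : (0:ℝ) ≤ π * (2/3))]
  congr 1
  ring

lemma lint_pos (c : ℝ) (hc0 : 0 < c) (hc1 : c ≤ 1) :
    ∫⁻ t, volume (sl c t) = ENNReal.ofReal (2 * π / 3 * (1 - c)) := by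
  have h1c : (0:ℝ) ≤ 1 - c^2 := by nlinarith
  have hc2 : (0:ℝ) < c^2 := by positivity
  set f1 : ℝ → ℝ≥0∞ := fun t => ENNReal.ofReal (π * (t^2*(1-c^2)/c^2)) with hf1
  set f2 : ℝ → ℝ≥0∞ := fun t => ENNReal.ofReal (π * (1 - t^2)) with hf2
  have hae : ∀ᵐ t : ℝ, volume (sl c t)
      = (Ioo 0 c).indicator f1 t + (Ioo c 1).indicator f2 t := by
    have hN : (volume : Measure ℝ) {c, 0} = 0 :=
      ((Set.finite_singleton (0:ℝ)).insert c).countable.measure_zero _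
    filter_upwards [measure_eq_zero_iff_ae_notMem.mp hN] with t ht
    simp only [Set.mem_insert_iff, Set.mem_singleton_iff, not_or] at ht
    obtain ⟨htc, ht0⟩ := ht
    rcases lt_trichotomy t 0 with htneg | h0 | htpos
    · -- t < 0 : empty
      have hsl : sl c t = ∅ := by
        ext y; simp only [sl, Set.mem_setOf_eq, Set.mem_empty_iff_false, iff_false, not_and]
        intro _ _
        rw [not_lt]
        exact htneg.le.trans (mul_nonneg hc0.le (Real.sqrt_nonneg _))
      rw [hsl, Set.indicator_of_notMem
          (show t ∉ Ioo (0:ℝ) c from fun h => absurd h.1 (not_lt.mpr htneg.le)) f1,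
        Set.indicator_of_notMem
          (show t ∉ Ioo c 1 from fun h => absurd (hc0.trans h.1) (not_lt.mpr htneg.le)) f2]
      simp
    · exact absurd h0 ht0
    · -- t > 0
      have ht2 : (0:ℝ) < t^2 := by positivity
      rcases lt_trichotomy t c with htlt | hteq | htgt
      · -- 0 < t < c : disk of radius² A
        have htcpos : 0 < t / c := div_pos htpos hc0
        have hA : t^2*(1-c^2)/c^2 = t^2/c^2 - t^2 := by field_simp
        have htc2 : t^2 < c^2 := by nlinarith
        have hdiv : t^2/c^2 < 1 := (div_lt_one hc2).mpr htc2
        have hsl : sl c t = {y : Fin 2 → ℝ | y 0 ^ 2 + y 1 ^ 2 < t^2*(1-c^2)/c^2} := by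
          ext y
          simp only [sl, Set.mem_setOf_eq]
          constructor
          · rintro ⟨h1, h2, h3⟩
            have h4 : Real.sqrt (t ^ 2 + (y 0 ^ 2 + y 1 ^ 2)) < t / c := by
              rw [lt_div_iff₀ hc0, mul_comm]; exact h3
            have h5 := (Real.sqrt_lt' htcpos).mp h4
            rw [div_pow] at h5
            rw [hA]; linarith
          · intro h
            have hq0 : (0:ℝ) ≤ y 0 ^ 2 + y 1 ^ 2 := by positivity
            rw [hA] at h
            refine ⟨by linarith, by linarith, ?_⟩
            rw [mul_comm, ← lt_div_iff₀ hc0, Real.sqrt_lt' htcpos, div_pow]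
            linarith
        rw [hsl, disk_vol _ (div_nonneg (mul_nonneg (sq_nonneg t) h1c) (sq_nonneg c)),
          Set.indicator_of_mem (Set.mem_Ioo.mpr ⟨htpos, htlt⟩) f1,
          Set.indicator_of_notMem
            (show t ∉ Ioo c 1 from fun h => absurd htlt (not_lt.mpr h.1.le)) f2, add_zero]
      · exact absurd hteq htc
      · -- c < t
        by_cases ht1 : t < 1
        · have hsl : sl c t = {y : Fin 2 → ℝ | y 0 ^ 2 + y 1 ^ 2 < 1 - t^2} := by
            ext y
            simp only [sl, Set.mem_setOf_eq]
            constructor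
            · rintro ⟨_, h2, _⟩; linarith
            · intro h
              have hq0 : (0:ℝ) ≤ y 0 ^ 2 + y 1 ^ 2 := by positivity
              refine ⟨by linarith, by linarith, ?_⟩
              have hs1 : Real.sqrt (t ^ 2 + (y 0 ^ 2 + y 1 ^ 2)) < 1 :=
                (Real.sqrt_lt' one_pos).mpr (by rw [one_pow]; linarith)
              calc c * Real.sqrt (t ^ 2 + (y 0 ^ 2 + y 1 ^ 2)) < c * 1 :=
                    mul_lt_mul_of_pos_left hs1 hc0
                _ = c := mul_one c
                _ < t := htgt
          rw [hsl, disk_vol _ (by nlinarith),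
            Set.indicator_of_notMem
              (show t ∉ Ioo (0:ℝ) c from fun h => absurd htgt (not_lt.mpr h.2.le)) f1,
            Set.indicator_of_mem (Set.mem_Ioo.mpr ⟨htgt, ht1⟩) f2, zero_add]
        · have hsl : sl c t = ∅ := by
            ext y; simp only [sl, Set.mem_setOf_eq, Set.mem_empty_iff_false, iff_false, not_and]
            intro _ h2
            push_neg at ht1
            have hq0 : (0:ℝ) ≤ y 0 ^ 2 + y 1 ^ 2 := by positivity
            exfalso; nlinarith
          rw [hsl, Set.indicator_of_notMem
              (show t ∉ Ioo (0:ℝ) c from fun h => absurd (h.2.trans_le hc1) ht1) f1,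
            Set.indicator_of_notMem (show t ∉ Ioo c 1 from fun h => ht1 h.2) f2]
          simp
  have hm1 : Measurable f1 := Measurable.ennreal_ofReal (by fun_prop)
  rw [lintegral_congr_ae hae, lintegral_add_left (hm1.indicator measurableSet_Ioo),
    lintegral_indicator measurableSet_Ioo, lintegral_indicator measurableSet_Ioo]
  have e1 : ∫⁻ t in Ioo 0 c, f1 t = ENNReal.ofReal (π * ((c - c^3)/3)) := by
    rw [hf1]
    have hint : IntegrableOn (fun t => π*(t^2*(1-c^2)/c^2)) (Ioo 0 c) := by
      exact ((by fun_prop : Continuous fun t : ℝ => π*(t^2*(1-c^2)/c^2)).integrableOn_Icc).mono_set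
        Ioo_subset_Icc_self
    have hnn : 0 ≤ᵐ[volume.restrict (Ioo (0:ℝ) c)] fun t => π*(t^2*(1-c^2)/c^2) := by
      refine Filter.Eventually.of_forall fun t => ?_
      exact mul_nonneg Real.pi_pos.le (div_nonneg (mul_nonneg (sq_nonneg t) h1c) (sq_nonneg c))
    rw [← ofReal_integral_eq_lintegral_ofReal hint hnn]
    congr 1
    rw [← integral_Ioc_eq_integral_Ioo, ← intervalIntegral.integral_of_le hc0.le]
    have hfun : (fun t : ℝ => π*(t^2*(1-c^2)/c^2)) = fun t : ℝ => (π*(1-c^2)/c^2) * t^2 := by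
      funext t; ring
    rw [hfun, intervalIntegral.integral_const_mul, integral_pow]
    have : c ≠ 0 := hc0.ne'
    field_simp
    ring
  have e2 : ∫⁻ t in Ioo c 1, f2 t = ENNReal.ofReal (π * (2/3 - c + c^3/3)) := by
    rw [hf2]
    have hint : IntegrableOn (fun t => π*(1-t^2)) (Ioo c 1) := by
      exact ((by fun_prop : Continuous fun t : ℝ => π*(1-t^2)).integrableOn_Icc).mono_set
        Ioo_subset_Icc_self
    have hnn : 0 ≤ᵐ[volume.restrict (Ioo c 1)] fun t => π*(1-t^2) := by
      filter_upwards [ae_restrict_mem measurableSet_Ioo] with t ht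
      obtain ⟨ha, hb⟩ := ht
      have : (0:ℝ) ≤ 1 - t^2 := by nlinarith
      positivity
    rw [← ofReal_integral_eq_lintegral_ofReal hint hnn]
    congr 1
    rw [← integral_Ioc_eq_integral_Ioo, ← intervalIntegral.integral_of_le hc1]
    have hfun : (fun t : ℝ => π*(1-t^2)) = fun t : ℝ => π - π * t^2 := by funext t; ring
    rw [hfun, intervalIntegral.integral_sub intervalIntegrable_const
        ((intervalIntegral.intervalIntegrable_pow 2).const_mul _),
      intervalIntegral.integral_const, intervalIntegral.integral_const_mul, integral_pow]
    simp only [smul_eq_mul]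
    ring
  rw [e1, e2, ← ENNReal.ofReal_add
    (mul_nonneg Real.pi_pos.le (by nlinarith) : (0:ℝ) ≤ π * ((c - c^3)/3))
    (mul_nonneg Real.pi_pos.le (by nlinarith [sq_nonneg (1-c), sq_nonneg (1+c)]) : (0:ℝ) ≤ π * (2/3 - c + c^3/3))]
  congr 1
  ring

lemma cone_vol (φ : EuclideanSpace ℝ (Fin 3)) (hφ : ‖φ‖ = 1) (c : ℝ)
    (hc1 : -1 ≤ c) (hc2 : c ≤ 1) :
    volume {x : EuclideanSpace ℝ (Fin 3) |
        0 < ‖x‖ ∧ ‖x‖ < 1 ∧ c * ‖x‖ < (inner ℝ φ x : ℝ)}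
      = ENNReal.ofReal (2 * π / 3 * (1 - c)) := by
  have hv : Orthonormal ℝ (Set.restrict {0} (fun _ : Fin 3 => φ)) := by
    constructor
    · intro i; exact hφ
    · intro i j hij
      exfalso
      apply hij
      apply Subtype.ext
      have hi := i.2
      have hj := j.2
      simp only [Set.mem_singleton_iff] at hi hj
      rw [hi, hj]
  obtain ⟨b, hb⟩ := hv.exists_orthonormalBasis_extension_of_card_eq
    (by simp [finrank_euclideanSpace])
  have hb0 : b 0 = φ := hb 0 rfl
  have hMS : MeasurableSet {z : EuclideanSpace ℝ (Fin 3) |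
      0 < ‖z‖ ∧ ‖z‖ < 1 ∧ c * ‖z‖ < z 0} := by
    have h1 : Measurable fun z : EuclideanSpace ℝ (Fin 3) => ‖z‖ := continuous_norm.measurable
    have h2 : Measurable fun z : EuclideanSpace ℝ (Fin 3) => z 0 :=
      (EuclideanSpace.proj (0 : Fin 3)).continuous.measurable
    exact (measurableSet_lt measurable_const h1).inter
      ((measurableSet_lt h1 measurable_const).inter
        (measurableSet_lt (h1.const_mul c) h2))
  have hpre : {x : EuclideanSpace ℝ (Fin 3) |
        0 < ‖x‖ ∧ ‖x‖ < 1 ∧ c * ‖x‖ < (inner ℝ φ x : ℝ)}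
      = ⇑b.repr ⁻¹' {z : EuclideanSpace ℝ (Fin 3) | 0 < ‖z‖ ∧ ‖z‖ < 1 ∧ c * ‖z‖ < z 0} := by
    ext x
    simp only [Set.mem_setOf_eq, Set.mem_preimage, b.repr.norm_map]
    have : b.repr x 0 = (inner ℝ φ x : ℝ) := by
      rw [b.repr_apply_apply, hb0]
    rw [this]
  rw [hpre, b.measurePreserving_repr.measure_preimage hMS.nullMeasurableSet, cone_vol_coord]
  rcases le_or_gt c 0 with hcs | hcs
  · exact lint_neg c hc1 hcs
  · exact lint_pos c hcs hc2

lemma cap_measure (φ : EuclideanSpace ℝ (Fin 3)) (hφ : ‖φ‖ = 1) (c : ℝ)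
    (hc1 : -1 ≤ c) (hc2 : c ≤ 1) :
    sphereMeasure {l : S2 | c < (inner ℝ φ (l : EuclideanSpace ℝ (Fin 3)) : ℝ)}
      = ENNReal.ofReal (2 * π * (1 - c)) := by
  have hmeas : MeasurableSet {l : S2 | c < (inner ℝ φ (l : EuclideanSpace ℝ (Fin 3)) : ℝ)} := by
    have : Measurable fun l : S2 => (inner ℝ φ (l : EuclideanSpace ℝ (Fin 3)) : ℝ) :=
      (continuous_const.inner continuous_subtype_val).measurable
    exact measurableSet_lt measurable_const this
  rw [sphereMeasure, Measure.toSphere_apply' _ hmeas]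
  have hsmul : Set.Ioo (0:ℝ) 1 •
      ((↑) '' {l : S2 | c < (inner ℝ φ (l : EuclideanSpace ℝ (Fin 3)) : ℝ)})
      = {x : EuclideanSpace ℝ (Fin 3) |
        0 < ‖x‖ ∧ ‖x‖ < 1 ∧ c * ‖x‖ < (inner ℝ φ x : ℝ)} := by
    ext x
    constructor
    · rintro ⟨r, hr, y, hy, rfl⟩
      obtain ⟨l, hl, rfl⟩ := hy
      have hln : ‖(l : EuclideanSpace ℝ (Fin 3))‖ = 1 := by
        have := l.2
        rwa [mem_sphere_zero_iff_norm] at this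
      have hnorm : ‖r • (l : EuclideanSpace ℝ (Fin 3))‖ = r := by
        rw [norm_smul, hln, mul_one, Real.norm_eq_abs, abs_of_pos hr.1]
      refine ⟨by rw [hnorm]; exact hr.1, by rw [hnorm]; exact hr.2, ?_⟩
      rw [hnorm, real_inner_smul_right, mul_comm c r]
      exact (mul_lt_mul_iff_right₀ hr.1).mpr hl
    · rintro ⟨h1, h2, h3⟩
      refine ⟨‖x‖, ⟨h1, h2⟩, ‖x‖⁻¹ • x, ?_, ?_⟩
      · refine ⟨⟨‖x‖⁻¹ • x, ?_⟩, ?_, rfl⟩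
        · rw [mem_sphere_zero_iff_norm, norm_smul, Real.norm_eq_abs,
            abs_of_pos (inv_pos.mpr h1), inv_mul_cancel₀ h1.ne']
        · show c < (inner ℝ φ (‖x‖⁻¹ • x) : ℝ)
          rw [real_inner_smul_right]
          have h4 : ‖x‖⁻¹ * (c * ‖x‖) < ‖x‖⁻¹ * (inner ℝ φ x : ℝ) :=
            mul_lt_mul_of_pos_left h3 (inv_pos.mpr h1)
          rwa [show ‖x‖⁻¹ * (c * ‖x‖) = c by field_simp] at h4
      · show ‖x‖ • (‖x‖⁻¹ • x) = x
        rw [smul_smul, mul_inv_cancel₀ h1.ne', one_smul]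
  rw [hsmul, cone_vol φ hφ c hc1 hc2]
  have hdim : (Module.finrank ℝ (EuclideanSpace ℝ (Fin 3)) : ℝ≥0∞) = ENNReal.ofReal 3 := by
    simp [finrank_euclideanSpace]
  rw [hdim, ← ENNReal.ofReal_mul (by norm_num : (0:ℝ) ≤ 3)]
  congr 1
  ring

end BellMerminAux

/-- **The Bell–Mermin model reproduces the Born rule.** For unit vectors φ, w ∈ ℝ³,
(1/(4π)) ∫_{S²} 1_{φ·(w+λ)>0}(λ) dσ(λ) = (1 + φ·w)/2.  With w = ψ this is the Born rule;
with w = λ' it recovers the Beltrametti–Bugajski indicator function by marginalizing over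
the hidden variable λ''. -/
theorem bellMermin_marginal (φ w : EuclideanSpace ℝ (Fin 3))
    (hφ : ‖φ‖ = 1) (hw : ‖w‖ = 1) :
    (1 / (4 * π)) * ∫ l : S2,
        Set.indicator {l : S2 | 0 < (inner ℝ φ (w + (l : EuclideanSpace ℝ (Fin 3))) : ℝ)}
          (fun _ => (1 : ℝ)) l ∂sphereMeasure
      = (1 + (inner ℝ φ w : ℝ)) / 2 := by
  set a : ℝ := (inner ℝ φ w : ℝ) with ha
  have habs : |a| ≤ 1 := by
    have := abs_real_inner_le_norm φ w
    rwa [hφ, hw, one_mul] at this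
  have ha1 : -1 ≤ a := neg_le_of_abs_le habs
  have ha2 : a ≤ 1 := le_of_abs_le habs
  have hset : {l : S2 | 0 < (inner ℝ φ (w + (l : EuclideanSpace ℝ (Fin 3))) : ℝ)}
      = {l : S2 | (-a) < (inner ℝ φ (l : EuclideanSpace ℝ (Fin 3)) : ℝ)} := by
    ext l
    simp only [Set.mem_setOf_eq, inner_add_right, ← ha]
    constructor <;> intro h <;> linarith
  have hmeas : MeasurableSet {l : S2 | (-a) < (inner ℝ φ (l : EuclideanSpace ℝ (Fin 3)) : ℝ)} := by
    have : Measurable fun l : S2 => (inner ℝ φ (l : EuclideanSpace ℝ (Fin 3)) : ℝ) :=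
      (continuous_const.inner continuous_subtype_val).measurable
    exact measurableSet_lt measurable_const this
  rw [hset]
  have hind : Set.indicator {l : S2 | (-a) < (inner ℝ φ (l : EuclideanSpace ℝ (Fin 3)) : ℝ)}
      (fun _ => (1 : ℝ)) = Set.indicator
      {l : S2 | (-a) < (inner ℝ φ (l : EuclideanSpace ℝ (Fin 3)) : ℝ)} 1 := rfl
  rw [hind, MeasureTheory.integral_indicator_one hmeas, measureReal_def,
    cap_measure φ hφ (-a) (by linarith) (by linarith),
    ENNReal.toReal_ofReal (by nlinarith [Real.pi_pos] : (0:ℝ) ≤ 2 * π * (1 - -a))]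
  have hπ : π ≠ 0 := Real.pi_ne_zero
  field_simp
  ring
end
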